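/- Let Q_M be a unimodular symmetric bilinear form on a finitely generated free abelian group and K a characteristic element (i.e. Q(K,x) ≡ Q(x,x) mod 2 for all x). If K = d·A for some element A and odd integer d, then Q(K,K) is divisible by d². If d is even, then Q is even (Q(x,x) ≡ 0 mod 2 for all x) and Q(K,K) is divisible by 2d². -/
import Mathlib


/-- A characteristic element `K` of a unimodular symmetric bilinear form `Q` on a
finitely generated free abelian group: if `K = d • A` with `d` odd, then `d² ∣ Q(K,K)`;
if `d` is even then `Q` is even and `2d² ∣ Q(K,K)`. -/
theorem stmt_0 {H : Type*} [AddCommGroup H] [Module ℤ H]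
    [Module.Free ℤ H] [Module.Finite ℤ H]
    (Q : H →ₗ[ℤ] H →ₗ[ℤ] ℤ)
    (hsymm : ∀ x y : H, Q x y = Q y x)
    (hunimod : Function.Bijective Q)
    (K A : H) (d : ℤ)
    (hchar : ∀ x : H, Q K x % 2 = Q x x % 2)
    (hK : K = d • A) :
    (Odd d → d ^ 2 ∣ Q K K) ∧
      (Even d → (∀ x : H, Q x x % 2 = 0) ∧ 2 * d ^ 2 ∣ Q K K) := by
  have hKK : Q K K = d ^ 2 * Q A A := by
    subst hK
    simp [map_smul, smul_eq_mul]
    ring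
  constructor
  · intro _
    exact ⟨Q A A, hKK⟩
  · intro hd
    obtain ⟨e, he⟩ := hd
    have hdeven : (2 : ℤ) ∣ d := ⟨e, by omega⟩
    have heven : ∀ x : H, Q x x % 2 = 0 := by
      intro x
      have h1 := hchar x
      have h2 : Q K x = d * Q A x := by
        subst hK; simp [map_smul, smul_eq_mul]
      have : (2 : ℤ) ∣ Q K x := by
        rw [h2]; exact Dvd.dvd.mul_right hdeven _
      omega
    refine ⟨heven, ?_⟩
    have hA : (2 : ℤ) ∣ Q A A := by have := heven A; omega
    obtain ⟨c, hc⟩ := hA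
    exact ⟨c, by rw [hKK, hc]; ring⟩
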